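/- The 2-configuration Z_r (union of r vertex-disjoint stars of sizes ⌈i/2⌉, i = 1,…,r) is contagious on K_n^3 with infection threshold r for n large enough, and hence ℓ_n(3,2,r) ≤ |Z_r| = (1/4)((r+1)^2 − 1_{r even}). -/

import Mathlib

open Finset

open Classical in
noncomputable def bootStep (V : Finset ℕ) (E : Finset (Finset ℕ)) (j r : ℕ)
    (A : Finset (Finset ℕ)) : Finset (Finset ℕ) :=
  A ∪ (V.powersetCard j).filter (fun J =>
    ∃ K : Fin r → Finset ℕ, ∃ Js : Fin r → Finset ℕ,
      Function.Injective K ∧ Function.Injective Js ∧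
      ∀ i : Fin r, K i ∈ E ∧ Js i ∈ A ∧ Js i ∪ J ⊆ K i)

/-- The infected sets at time `t` of the bootstrap percolation process on a hypergraph
with vertex set `V`, edge set `E`, evolving on `j`-sets with infection threshold `r`. -/
noncomputable def bootProc (V : Finset ℕ) (E : Finset (Finset ℕ)) (j r : ℕ)
    (A0 : Finset (Finset ℕ)) (t : ℕ) : Finset (Finset ℕ) :=
  (bootStep V E j r)^[t] A0

/-- The process on the complete `k`-uniform hypergraph on `V`. -/
noncomputable def compProc (V : Finset ℕ) (k j r : ℕ)
    (A0 : Finset (Finset ℕ)) (t : ℕ) : Finset (Finset ℕ) :=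
  bootProc V (V.powersetCard k) j r A0 t

/-- `A0` is contagious: eventually all `j`-sets of `V` are infected. -/
def Percolates (V : Finset ℕ) (k j r : ℕ) (A0 : Finset (Finset ℕ)) : Prop :=
  ∃ t, compProc V k j r A0 t = V.powersetCard j

/-- `ℓ_n(k,j,r)`: minimum size of a contagious `j`-configuration in `K_n^k`. -/
noncomputable def ellMin (n k j r : ℕ) : ℕ :=
  sInf {m | ∃ A0 : Finset (Finset ℕ), A0 ⊆ (range n).powersetCard j ∧
    A0.card = m ∧ Percolates (range n) k j r A0}

open Classical in
/-- The extension set of a `(k-1)`-set `J` with respect to configuration `C` in the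
complete `k`-uniform hypergraph on `V`. -/
noncomputable def extSet (V : Finset ℕ) (k : ℕ) (C : Finset (Finset ℕ))
    (J : Finset ℕ) : Finset ℕ :=
  V.filter (fun v => ∃ J' ∈ C, J' ≠ J ∧ J' ⊆ insert v J ∧ insert v J ∈ V.powersetCard k)

/-- The configuration Z_r: r vertex-disjoint stars of pairs with centres v i and
leaf sets L i of sizes ceil((i+1)/2) for i = 0,...,r-1. -/
def IsZConfig (n r : ℕ) (v : Fin r → ℕ) (Z : Finset (Finset ℕ)) : Prop :=
  ∃ L : Fin r → Finset ℕ,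
    (∀ i, L i ⊆ range n ∧ v i ∈ range n ∧ v i ∉ L i ∧ (L i).card = (i.val + 2) / 2) ∧
    (∀ i i', i ≠ i' → Disjoint (insert (v i) (L i)) (insert (v i') (L i'))) ∧
    Z = Finset.univ.biUnion (fun i => (L i).image (fun u => {v i, u}))

-- ===== auxiliary lemmas =====

lemma bootProc_succ (V : Finset ℕ) (E : Finset (Finset ℕ)) (j r : ℕ)
    (A0 : Finset (Finset ℕ)) (t : ℕ) :
    bootProc V E j r A0 (t+1) = bootStep V E j r (bootProc V E j r A0 t) := by
  rw [bootProc, Function.iterate_succ_apply']; rfl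

lemma subset_bootStep (V : Finset ℕ) (E : Finset (Finset ℕ)) (j r : ℕ)
    (A : Finset (Finset ℕ)) : A ⊆ bootStep V E j r A := by
  rw [bootStep]; exact Finset.subset_union_left

open Classical in
lemma bootStep_subset (V : Finset ℕ) (E : Finset (Finset ℕ)) (j r : ℕ)
    (A : Finset (Finset ℕ)) : bootStep V E j r A ⊆ A ∪ V.powersetCard j := by
  rw [bootStep]; exact Finset.union_subset_union_right (Finset.filter_subset _ _)

lemma bootProc_mono_t (V : Finset ℕ) (E : Finset (Finset ℕ)) (j r : ℕ)
    (A0 : Finset (Finset ℕ)) {s t : ℕ} (h : s ≤ t) :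
    bootProc V E j r A0 s ⊆ bootProc V E j r A0 t := by
  induction t with
  | zero => simp_all [Nat.le_zero.mp h]
  | succ t ih =>
    rcases Nat.lt_or_ge s (t+1) with h' | h'
    · refine (ih (Nat.lt_succ_iff.mp h')).trans ?_
      rw [bootProc_succ]
      exact subset_bootStep _ _ _ _ _
    · have : s = t+1 := le_antisymm h h'
      subst this; rfl

lemma bootProc_subset_powersetCard (V : Finset ℕ) (E : Finset (Finset ℕ)) (j r : ℕ)
    (A0 : Finset (Finset ℕ)) (hA0 : A0 ⊆ V.powersetCard j) (t : ℕ) :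
    bootProc V E j r A0 t ⊆ V.powersetCard j := by
  induction t with
  | zero => exact hA0
  | succ t ih =>
    rw [bootProc_succ]
    exact (bootStep_subset _ _ _ _ _).trans (Finset.union_subset ih (le_refl _))

open Classical in
lemma mem_bootStep_of_exts (n r : ℕ) (A : Finset (Finset ℕ)) (J : Finset ℕ)
    (hJ : J ∈ (range n).powersetCard 2)
    (f : Fin r → ℕ) (hfinj : Function.Injective f)
    (hf : ∀ i, f i ∈ range n ∧ f i ∉ J ∧ ∃ J' ∈ A, J' ≠ J ∧ f i ∈ J' ∧ J' ⊆ insert (f i) J) :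
    J ∈ bootStep (range n) ((range n).powersetCard 3) 2 r A := by
  rw [bootStep, Finset.mem_union, Finset.mem_filter]
  right
  refine ⟨hJ, ?_⟩
  choose hfn hfJ J' hJ'A hJ'ne hfJ' hJ'sub using hf
  obtain ⟨hsub, hcard⟩ := Finset.mem_powersetCard.mp hJ
  refine ⟨fun i => insert (f i) J, J', ?_, ?_, ?_⟩
  · intro i i' h
    replace h : insert (f i) J = insert (f i') J := h
    have h2 : f i' ∈ insert (f i) J := by rw [h]; exact Finset.mem_insert_self _ _
    rcases Finset.mem_insert.mp h2 with h' | h'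
    · exact (hfinj h').symm
    · exact absurd h' (hfJ i')
  · intro i i' h
    have h2 : f i' ∈ insert (f i) J := (hJ'sub i) (by rw [h]; exact hfJ' i')
    rcases Finset.mem_insert.mp h2 with h' | h'
    · exact (hfinj h').symm
    · exact absurd h' (hfJ i')
  · intro i
    refine ⟨?_, hJ'A i, Finset.union_subset (hJ'sub i) (Finset.subset_insert _ _)⟩
    rw [Finset.mem_powersetCard]
    exact ⟨Finset.insert_subset (hfn i) hsub,
      by rw [Finset.card_insert_of_notMem (hfJ i), hcard]⟩

lemma evinf_of_ext (n r : ℕ) (Z : Finset (Finset ℕ)) (J : Finset ℕ)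
    (hJ : J ∈ (range n).powersetCard 2) (S : Finset ℕ) (hS : r ≤ S.card)
    (hext : ∀ u ∈ S, u ∈ range n ∧ u ∉ J ∧ ∃ J', (∃ t, J' ∈ compProc (range n) 3 2 r Z t) ∧
      J' ≠ J ∧ u ∈ J' ∧ J' ⊆ insert u J) :
    ∃ t, J ∈ compProc (range n) 3 2 r Z t := by
  obtain ⟨S', hS'sub, hS'card⟩ := Finset.exists_subset_card_eq hS
  have e := S'.orderIsoOfFin hS'card
  set f : Fin r → ℕ := fun i => (e i : ℕ) with hf
  have hfinj : Function.Injective f := fun i i' h => e.injective (Subtype.ext h)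
  have hmem : ∀ i, f i ∈ S := fun i => hS'sub (e i).2
  have h1 : ∀ i : Fin r, ∃ J' t, J' ∈ compProc (range n) 3 2 r Z t ∧ J' ≠ J ∧
      f i ∈ J' ∧ J' ⊆ insert (f i) J := by
    intro i
    obtain ⟨_, _, J', ⟨t, ht⟩, h2, h3, h4⟩ := hext _ (hmem i)
    exact ⟨J', t, ht, h2, h3, h4⟩
  choose Js ts hts hne hmemJ hsubJ using h1
  refine ⟨Finset.univ.sup ts + 1, ?_⟩
  rw [compProc, bootProc_succ]
  apply mem_bootStep_of_exts n r _ J hJ f hfinj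
  intro i
  exact ⟨(hext _ (hmem i)).1, (hext _ (hmem i)).2.1, Js i,
    bootProc_mono_t _ _ _ _ _ (Finset.le_sup (Finset.mem_univ i)) (hts i),
    hne i, hmemJ i, hsubJ i⟩
lemma pair_mem_P2 (n : ℕ) {a b : ℕ} (ha : a ∈ range n) (hb : b ∈ range n) (hne : a ≠ b) :
    ({a, b} : Finset ℕ) ∈ (range n).powersetCard 2 := by
  rw [Finset.mem_powersetCard]
  constructor
  · intro x hx
    rcases Finset.mem_insert.mp hx with rfl | hx
    · exact ha
    · rw [Finset.mem_singleton.mp hx]; exact hb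
  · rw [Finset.card_insert_of_notMem (by simpa using hne), Finset.card_singleton]

lemma zconfig_subset (n r : ℕ) (v : Fin r → ℕ) (Z : Finset (Finset ℕ))
    (hZ : IsZConfig n r v Z) : Z ⊆ (range n).powersetCard 2 := by
  obtain ⟨L, hL, hdisj, hZdef⟩ := hZ
  intro J hJ
  rw [hZdef] at hJ
  obtain ⟨i, -, hJ⟩ := Finset.mem_biUnion.mp hJ
  obtain ⟨u, hu, rfl⟩ := Finset.mem_image.mp hJ
  exact pair_mem_P2 n ((hL i).2.1) ((hL i).1 hu) (fun h => (hL i).2.2.1 (h ▸ hu))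

lemma zconfig_percolates (n r : ℕ) (hr : 1 ≤ r) (v : Fin r → ℕ) (Z : Finset (Finset ℕ))
    (hZ : IsZConfig n r v Z) : Percolates (range n) 3 2 r Z := by
  classical
  have hZsub : Z ⊆ (range n).powersetCard 2 := zconfig_subset n r v Z hZ
  obtain ⟨L, hL, hdisj, hZdef⟩ := hZ
  have hvinj : Function.Injective v := by
    intro i i' h
    by_contra hne
    exact Finset.disjoint_left.mp (hdisj i i' hne) (Finset.mem_insert_self _ _)
      (by rw [h]; exact Finset.mem_insert_self _ _)
  have hstar : ∀ i i' : Fin r, i ≠ i' → ∀ x ∈ insert (v i) (L i), x ∉ insert (v i') (L i') :=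
    fun i i' hne x hx => Finset.disjoint_left.mp (hdisj i i' hne) hx
  have hvr : ∀ i, v i ∈ range n := fun i => (hL i).2.1
  have hLr : ∀ i, ∀ u ∈ L i, u ∈ range n := fun i u hu => (hL i).1 hu
  have hvL : ∀ i, ∀ u ∈ L i, u ≠ v i := by
    intro i u hu h; exact (hL i).2.2.1 (h ▸ hu)
  have hvL' : ∀ i i' : Fin r, i ≠ i' → ∀ u ∈ L i, u ≠ v i' := by
    intro i i' hne u hu h
    exact hstar i i' hne u (Finset.mem_insert_of_mem hu) (h ▸ Finset.mem_insert_self _ _)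
  have hvv : ∀ i i' : Fin r, i ≠ i' → v i ≠ v i' := fun i i' hne h => hne (hvinj h)
  have hZmem : ∀ i : Fin r, ∀ u ∈ L i, ({v i, u} : Finset ℕ) ∈ Z := by
    intro i u hu
    rw [hZdef]
    exact Finset.mem_biUnion.mpr ⟨i, Finset.mem_univ i, Finset.mem_image_of_mem _ hu⟩
  have pair_ne : ∀ (P Q : Finset ℕ) (x : ℕ), x ∈ P → x ∉ Q → Q ≠ P := by
    intro P Q x hx hx' h; subst h; exact hx' hx
  set Ev : Finset ℕ → Prop := fun J => ∃ t, J ∈ compProc (range n) 3 2 r Z t with hEv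
  have hEvZ : ∀ J ∈ Z, Ev J := fun J h => ⟨0, by simpa [compProc, bootProc] using h⟩
  -- Stage 1 : pairs of centres
  have stage1 : ∀ k : ℕ, ∀ i j : Fin r, i < j → r - i.val ≤ k → Ev {v i, v j} := by
    intro k
    induction k with
    | zero => intro i j _ hk; exfalso; have := i.isLt; omega
    | succ k ih =>
      intro i j hij hk
      have hijne : i ≠ j := Fin.ne_of_lt hij
      have hijval : i.val < j.val := hij
      set T : Finset (Fin r) := (Finset.Ioi i).erase j with hT
      have hTmem : ∀ m ∈ T, i < m ∧ m ≠ j := by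
        intro m hm
        obtain ⟨h1, h2⟩ := Finset.mem_erase.mp hm
        exact ⟨Finset.mem_Ioi.mp h2, h1⟩
      set S : Finset ℕ := (L i ∪ L j) ∪ T.image v with hS
      apply evinf_of_ext n r Z _ (pair_mem_P2 n (hvr i) (hvr j) (hvv i j hijne)) S
      · -- cardinality bound
        have hd1 : Disjoint (L i) (L j) :=
          (hdisj i j hijne).mono (Finset.subset_insert _ _) (Finset.subset_insert _ _)
        have hd2 : Disjoint (L i ∪ L j) (T.image v) := by
          rw [Finset.disjoint_left]
          intro x hx hx'
          obtain ⟨m, hm, rfl⟩ := Finset.mem_image.mp hx'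
          obtain ⟨him, hmj⟩ := hTmem m hm
          rcases Finset.mem_union.mp hx with h | h
          · exact hvL' i m (Fin.ne_of_lt him) (v m) h rfl
          · exact hvL' j m (Ne.symm hmj) (v m) h rfl
        have hcardS : S.card = (L i).card + (L j).card + T.card := by
          rw [hS, Finset.card_union_of_disjoint hd2, Finset.card_union_of_disjoint hd1,
            Finset.card_image_of_injOn hvinj.injOn]
        have hTcard : T.card = r - 1 - i.val - 1 := by
          rw [hT, Finset.card_erase_of_mem (Finset.mem_Ioi.mpr hij), Fin.card_Ioi]
        have hli : (L i).card = (i.val + 2) / 2 := (hL i).2.2.2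
        have hlj : (L j).card = (j.val + 2) / 2 := (hL j).2.2.2
        have hjr : j.val < r := j.isLt
        omega
      · -- extension property
        intro u hu
        rcases Finset.mem_union.mp hu with hu' | hu'
        · rcases Finset.mem_union.mp hu' with huL | huL
          · -- u ∈ L i
            have h1 : u ≠ v i := hvL i u huL
            have h2 : u ≠ v j := hvL' i j hijne u huL
            refine ⟨hLr i u huL, ?_, {v i, u}, hEvZ _ (hZmem i u huL), ?_, by simp, ?_⟩
            · simp only [Finset.mem_insert, Finset.mem_singleton]; push_neg; exact ⟨h1, h2⟩
            · refine pair_ne _ _ (v j) (by simp) ?_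
              simp only [Finset.mem_insert, Finset.mem_singleton]; push_neg
              exact ⟨Ne.symm (hvv i j hijne), Ne.symm h2⟩
            · intro x hx
              simp only [Finset.mem_insert, Finset.mem_singleton] at hx ⊢; tauto
          · -- u ∈ L j
            have h1 : u ≠ v j := hvL j u huL
            have h2 : u ≠ v i := hvL' j i (Ne.symm hijne) u huL
            refine ⟨hLr j u huL, ?_, {v j, u}, hEvZ _ (hZmem j u huL), ?_, by simp, ?_⟩
            · simp only [Finset.mem_insert, Finset.mem_singleton]; push_neg; exact ⟨h2, h1⟩
            · refine pair_ne _ _ (v i) (by simp) ?_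
              simp only [Finset.mem_insert, Finset.mem_singleton]; push_neg
              exact ⟨hvv i j hijne, Ne.symm h2⟩
            · intro x hx
              simp only [Finset.mem_insert, Finset.mem_singleton] at hx ⊢; tauto
        · -- u = v m for m ∈ T
          obtain ⟨m, hm, rfl⟩ := Finset.mem_image.mp hu'
          obtain ⟨him, hmj⟩ := hTmem m hm
          have himne : i ≠ m := Fin.ne_of_lt him
          have hEvJ' : Ev {v m, v j} := by
            rcases lt_or_gt_of_ne hmj with h | h
            · exact ih m j h (by have := Fin.lt_def.mp him; omega)
            · rw [Finset.pair_comm]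
              exact ih j m h (by omega)
          refine ⟨hvr m, ?_, {v m, v j}, hEvJ', ?_, by simp, ?_⟩
          · simp only [Finset.mem_insert, Finset.mem_singleton]; push_neg
            exact ⟨Ne.symm (hvv i m himne), hvv m j hmj⟩
          · refine pair_ne _ _ (v i) (by simp) ?_
            simp only [Finset.mem_insert, Finset.mem_singleton]; push_neg
            exact ⟨hvv i m himne, hvv i j hijne⟩
          · intro x hx
            simp only [Finset.mem_insert, Finset.mem_singleton] at hx ⊢; tauto
  -- Stage 2 : pairs containing a centre
  have stage2 : ∀ (jj : Fin r) (w : ℕ), w ∈ range n → w ≠ v jj → Ev {w, v jj} := by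
    intro jj w hw hwne
    by_cases hc : ∃ m, w = v m
    · obtain ⟨m, rfl⟩ := hc
      have hm : m ≠ jj := fun h => hwne (congrArg v h)
      rcases lt_or_gt_of_ne hm with h | h
      · exact stage1 r m jj h (by omega)
      · rw [Finset.pair_comm]
        exact stage1 r jj m h (by omega)
    · by_cases hw2 : w ∈ L jj
      · rw [Finset.pair_comm]
        exact hEvZ _ (hZmem jj w hw2)
      · set S : Finset ℕ := L jj ∪ (Finset.univ.erase jj).image v with hS
        apply evinf_of_ext n r Z _ (pair_mem_P2 n hw (hvr jj) hwne) S
        · have hd : Disjoint (L jj) ((Finset.univ.erase jj).image v) := by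
            rw [Finset.disjoint_left]
            intro x hx hx'
            obtain ⟨m, hm, rfl⟩ := Finset.mem_image.mp hx'
            exact hvL' jj m (Ne.symm (Finset.mem_erase.mp hm).1) (v m) hx rfl
          have hcardS : S.card = (L jj).card + (r - 1) := by
            rw [hS, Finset.card_union_of_disjoint hd, Finset.card_image_of_injOn hvinj.injOn,
              Finset.card_erase_of_mem (Finset.mem_univ jj), Finset.card_univ, Fintype.card_fin]
          have hljj : (L jj).card = (jj.val + 2) / 2 := (hL jj).2.2.2
          omega
        · intro u hu
          rcases Finset.mem_union.mp hu with huL | hu'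
          · have h1 : u ≠ v jj := hvL jj u huL
            have h2 : u ≠ w := fun h => hw2 (h ▸ huL)
            refine ⟨hLr jj u huL, ?_, {v jj, u}, hEvZ _ (hZmem jj u huL), ?_, by simp, ?_⟩
            · simp only [Finset.mem_insert, Finset.mem_singleton]; push_neg; exact ⟨h2, h1⟩
            · refine pair_ne _ _ w (by simp) ?_
              simp only [Finset.mem_insert, Finset.mem_singleton]; push_neg
              exact ⟨hwne, Ne.symm h2⟩
            · intro x hx
              simp only [Finset.mem_insert, Finset.mem_singleton] at hx ⊢; tauto
          · obtain ⟨m, hm, rfl⟩ := Finset.mem_image.mp hu'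
            have hmjj : m ≠ jj := (Finset.mem_erase.mp hm).1
            have hEvJ' : Ev {v m, v jj} := by
              rcases lt_or_gt_of_ne hmjj with h | h
              · exact stage1 r m jj h (by omega)
              · rw [Finset.pair_comm]
                exact stage1 r jj m h (by omega)
            have hwm : w ≠ v m := fun h => hc ⟨m, h⟩
            refine ⟨hvr m, ?_, {v m, v jj}, hEvJ', ?_, by simp, ?_⟩
            · simp only [Finset.mem_insert, Finset.mem_singleton]; push_neg
              exact ⟨Ne.symm hwm, hvv m jj hmjj⟩
            · refine pair_ne _ _ w (by simp) ?_
              simp only [Finset.mem_insert, Finset.mem_singleton]; push_neg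
              exact ⟨hwm, hwne⟩
            · intro x hx
              simp only [Finset.mem_insert, Finset.mem_singleton] at hx ⊢; tauto
  -- Stage 3 : all pairs
  have stage3 : ∀ J ∈ (range n).powersetCard 2, Ev J := by
    intro J hJ
    obtain ⟨hsub, hcard⟩ := Finset.mem_powersetCard.mp hJ
    obtain ⟨a, b, hab, rfl⟩ := Finset.card_eq_two.mp hcard
    have ha : a ∈ range n := hsub (by simp)
    have hb : b ∈ range n := hsub (by simp)
    by_cases hca : ∃ m, a = v m
    · obtain ⟨m, rfl⟩ := hca
      rw [Finset.pair_comm]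
      exact stage2 m b hb (fun h => hab h.symm)
    · by_cases hcb : ∃ m, b = v m
      · obtain ⟨m, rfl⟩ := hcb
        exact stage2 m a ha hab
      · apply evinf_of_ext n r Z _ hJ (Finset.univ.image v)
        · rw [Finset.card_image_of_injOn hvinj.injOn, Finset.card_univ, Fintype.card_fin]
        · intro u hu
          obtain ⟨m, -, rfl⟩ := Finset.mem_image.mp hu
          have h1 : a ≠ v m := fun h => hca ⟨m, h⟩
          have h2 : b ≠ v m := fun h => hcb ⟨m, h⟩
          refine ⟨hvr m, ?_, {a, v m}, stage2 m a ha h1, ?_, by simp, ?_⟩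
          · simp only [Finset.mem_insert, Finset.mem_singleton]; push_neg
            exact ⟨Ne.symm h1, Ne.symm h2⟩
          · refine pair_ne _ _ b (by simp) ?_
            simp only [Finset.mem_insert, Finset.mem_singleton]; push_neg
            exact ⟨Ne.symm hab, h2⟩
          · intro x hx
            simp only [Finset.mem_insert, Finset.mem_singleton] at hx ⊢; tauto
  -- conclude
  choose! f hf using stage3
  refine ⟨((range n).powersetCard 2).sup f, Finset.Subset.antisymm ?_ ?_⟩
  · exact bootProc_subset_powersetCard _ _ _ _ _ hZsub _
  · intro J hJ
    exact bootProc_mono_t _ _ _ _ _ (Finset.le_sup hJ) (hf J hJ)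
lemma sum_div_id (r : ℕ) :
    4 * (∑ i ∈ Finset.range r, (i + 2) / 2) + (if Even r then 1 else 0) = (r + 1) ^ 2 := by
  have h : ∀ m : ℕ, (if Even m then 1 else 0) = 1 - m % 2 := by
    intro m
    rcases Nat.even_or_odd m with h | h
    · rw [if_pos h, Nat.even_iff.mp h]
    · rw [if_neg (Nat.not_even_iff_odd.mpr h), Nat.odd_iff.mp h]
  rw [h]
  induction r with
  | zero => norm_num
  | succ r ih =>
    rw [Finset.sum_range_succ]
    have h1 : (r + 1 + 1) ^ 2 = (r + 1) ^ 2 + 2 * r + 3 := by ring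
    rw [h1]
    generalize (r + 1) ^ 2 = a at ih ⊢
    omega

lemma zconfig_card (n r : ℕ) (v : Fin r → ℕ) (Z : Finset (Finset ℕ))
    (hZ : IsZConfig n r v Z) :
    4 * Z.card = (r + 1) ^ 2 - (if Even r then 1 else 0) := by
  classical
  obtain ⟨L, hL, hdisj, hZdef⟩ := hZ
  have hvL' : ∀ i i' : Fin r, i ≠ i' → ∀ u ∈ L i, u ≠ v i' := by
    intro i i' hne u hu h
    exact Finset.disjoint_left.mp (hdisj i i' hne) (Finset.mem_insert_of_mem hu)
      (h ▸ Finset.mem_insert_self _ _)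
  have hvinj : Function.Injective v := by
    intro i i' h
    by_contra hne
    exact Finset.disjoint_left.mp (hdisj i i' hne) (Finset.mem_insert_self _ _)
      (by rw [h]; exact Finset.mem_insert_self _ _)
  have hZcard : Z.card = ∑ i : Fin r, (L i).card := by
    rw [hZdef, Finset.card_biUnion]
    · apply Finset.sum_congr rfl
      intro i _
      apply Finset.card_image_of_injOn
      intro u hu u' hu' h
      replace h : ({v i, u} : Finset ℕ) = {v i, u'} := h
      have : u' ∈ ({v i, u} : Finset ℕ) := by rw [h]; simp
      rcases Finset.mem_insert.mp this with h' | h'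
      · exact absurd h' (fun hh => (hL i).2.2.1 (hh ▸ hu'))
      · exact (Finset.mem_singleton.mp h').symm
    · intro x _ y _ hxy
      rw [Function.onFun, Finset.disjoint_left]
      intro p hp hp'
      obtain ⟨u, hu, rfl⟩ := Finset.mem_image.mp hp
      obtain ⟨u', hu', hq⟩ := Finset.mem_image.mp hp'
      have : v y ∈ ({v x, u} : Finset ℕ) := by rw [← hq]; simp
      rcases Finset.mem_insert.mp this with h' | h'
      · exact hxy (hvinj h'.symm)
      · exact hvL' x y hxy u hu (Finset.mem_singleton.mp h').symm
  have hsum : ∑ i : Fin r, (L i).card = ∑ i ∈ Finset.range r, (i + 2) / 2 := by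
    rw [Finset.sum_congr rfl (fun i _ => (hL i).2.2.2)]
    exact Fin.sum_univ_eq_sum_range (fun i => (i + 2) / 2) r
  have := sum_div_id r
  have hle : (if Even r then 1 else 0) ≤ (r + 1) ^ 2 := by
    rcases Nat.even_or_odd r with h | h
    · rw [if_pos h]; exact Nat.one_le_pow 2 (r + 1) (Nat.succ_pos r)
    · rw [if_neg (Nat.not_even_iff_odd.mpr h)]; exact Nat.zero_le _
  rw [hZcard, hsum]
  generalize (r + 1) ^ 2 = a at this hle ⊢
  generalize (if Even r then 1 else 0) = b at this hle ⊢
  omega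

lemma exists_zconfig (n r : ℕ) (hr : 1 ≤ r) (hn : (r + 1) * (r + 1) ≤ n) :
    ∃ (v : Fin r → ℕ) (Z : Finset (Finset ℕ)), IsZConfig n r v Z := by
  classical
  set v : Fin r → ℕ := fun i => i.val * (r + 1) with hv
  set L : Fin r → Finset ℕ :=
    fun i => Finset.Ico (i.val * (r + 1) + 1) (i.val * (r + 1) + 1 + (i.val + 2) / 2) with hL
  have hblock : ∀ i : Fin r, ∀ x ∈ insert (v i) (L i),
      i.val * (r + 1) ≤ x ∧ x < i.val * (r + 1) + (r + 1) := by
    intro i x hx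
    have hir : i.val < r := i.isLt
    rcases Finset.mem_insert.mp hx with rfl | hx
    · simp only [hv]; omega
    · rw [hL] at hx
      simp only [Finset.mem_Ico] at hx
      omega
  have hsep : ∀ i i' : Fin r, i.val < i'.val →
      i.val * (r + 1) + (r + 1) ≤ i'.val * (r + 1) := by
    intro i i' h
    have h2 := Nat.mul_le_mul_right (r + 1) (Nat.succ_le_of_lt h)
    rwa [Nat.succ_mul] at h2
  have hblockn : ∀ i : Fin r, i.val * (r + 1) + (r + 1) ≤ n := by
    intro i
    have h2 := Nat.mul_le_mul_right (r + 1) (Nat.succ_le_of_lt i.isLt)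
    rw [Nat.succ_mul] at h2
    have h3 : r * (r + 1) ≤ (r + 1) * (r + 1) := Nat.mul_le_mul_right (r + 1) (by omega)
    omega
  refine ⟨v, Finset.univ.biUnion (fun i => (L i).image (fun u => {v i, u})), L, ?_, ?_, rfl⟩
  · intro i
    refine ⟨?_, ?_, ?_, ?_⟩
    · intro x hx
      rw [Finset.mem_range]
      have := hblock i x (Finset.mem_insert_of_mem hx)
      have := hblockn i
      omega
    · rw [Finset.mem_range]
      have := hblockn i
      simp only [hv]
      omega
    · rw [hL]
      simp only [Finset.mem_Ico, hv]
      omega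
    · rw [hL, Nat.card_Ico]
      omega
  · intro i i' hne
    rw [Finset.disjoint_left]
    intro x hx hx'
    have h1 := hblock i x hx
    have h2 := hblock i' x hx'
    have hvalne : i.val ≠ i'.val := fun h => hne (Fin.ext h)
    rcases Nat.lt_or_ge i.val i'.val with h | h
    · have := hsep i i' h
      omega
    · have := hsep i' i (by omega)
      omega
theorem stmt14 (r : ℕ) (hr : 1 ≤ r) :
    ∃ n0, ∀ n ≥ n0,
      (∀ (v : Fin r → ℕ) (Z : Finset (Finset ℕ)), IsZConfig n r v Z →
        Percolates (range n) 3 2 r Z ∧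
        4 * Z.card = (r + 1) ^ 2 - (if Even r then 1 else 0)) ∧
      4 * ellMin n 3 2 r ≤ (r + 1) ^ 2 - (if Even r then 1 else 0) := by
  refine ⟨(r + 1) * (r + 1), fun n hn => ?_⟩
  have hmain : ∀ (v : Fin r → ℕ) (Z : Finset (Finset ℕ)), IsZConfig n r v Z →
      Percolates (range n) 3 2 r Z ∧
      4 * Z.card = (r + 1) ^ 2 - (if Even r then 1 else 0) :=
    fun v Z hZ => ⟨zconfig_percolates n r hr v Z hZ, zconfig_card n r v Z hZ⟩
  refine ⟨hmain, ?_⟩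
  obtain ⟨v, Z, hZ⟩ := exists_zconfig n r hr hn
  obtain ⟨hperc, hcard⟩ := hmain v Z hZ
  have h1 : ellMin n 3 2 r ≤ Z.card :=
    Nat.sInf_le ⟨Z, zconfig_subset n r v Z hZ, rfl, hperc⟩
  calc 4 * ellMin n 3 2 r ≤ 4 * Z.card := Nat.mul_le_mul_left 4 h1
    _ = (r + 1) ^ 2 - (if Even r then 1 else 0) := hcard
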